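/- The star-controlled GCID system with two components, alphabet V = T = {a, b, c, d}, axiom abcd in component C1, initial and final component C1, and rules (1, (a, a, λ)_I, 2), (1, (b, b, λ)_I, 2), (2, (c, c, λ)_I, 1), (2, (d, d, λ)_I, 1) generates exactly the language { aⁱbʲcⁿdᵐ : i, j, m, n ≥ 1 and i + j = n + m }. -/

import Mathlib

/-!
Graph-controlled insertion-deletion (GCID) systems.

Symbols are drawn from the universal symbol set `ℕ`, strings are lists of
symbols.  A GCID system `Π = (k, V, T, A, H, i0, F, R)` has `k` components;
rules `(i, r, j)` move a string from component `i` to component `j`, where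
`r` is an insertion rule `(u, η, v)_I` (rewriting `uv → uηv`) or a deletion
rule `(u, δ, v)_D` (rewriting `uδv → uv`), with `u, v ∈ V*` and `η, δ ∈ V⁺`.
-/

namespace GCIDPaper

/-- Strings over the universal symbol set `ℕ`. -/
abbrev Word : Type := List ℕ

/-- An insertion rule `(u, s, v)_I` (when `isInsertion = true`) or a deletion
rule `(u, s, v)_D` (when `isInsertion = false`), with left context `lctx = u`,
inserted resp. deleted string `core = s`, and right context `rctx = v`. -/
structure InsDelRule : Type where
  isInsertion : Bool
  lctx : Word
  core : Word
  rctx : Word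
  deriving DecidableEq

/-- The insertion rule `(u, η, v)_I`. -/
def insRule (u η v : Word) : InsDelRule := ⟨true, u, η, v⟩

/-- The deletion rule `(u, δ, v)_D`. -/
def delRule (u δ v : Word) : InsDelRule := ⟨false, u, δ, v⟩

/-- Applying a rule to a string: the insertion rule `(u, η, v)_I` corresponds
to the rewriting `uv → uηv`, the deletion rule `(u, δ, v)_D` to `uδv → uv`. -/
def InsDelRule.Applies (r : InsDelRule) (w w' : Word) : Prop :=
  (r.isInsertion = true →
    ∃ x y, w = x ++ r.lctx ++ r.rctx ++ y ∧
      w' = x ++ r.lctx ++ r.core ++ r.rctx ++ y) ∧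
  (r.isInsertion = false →
    ∃ x y, w = x ++ r.lctx ++ r.core ++ r.rctx ++ y ∧
      w' = x ++ r.lctx ++ r.rctx ++ y)

/-- A graph-controlled insertion-deletion system.  The components are
numbered `1, …, k`; `i0` is the initial component, `F` the set of final
components, `axioms` the finite set of axioms (placed in component `i0`),
and `R` the finite set of rules `(i, r, j)`. -/
structure System : Type where
  k : ℕ
  V : Finset ℕ
  T : Finset ℕ
  axioms : Finset Word
  i0 : ℕ
  F : Finset ℕ
  R : Finset (ℕ × InsDelRule × ℕ)
  k_pos : 1 ≤ k
  T_sub_V : T ⊆ V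
  axioms_over_V : ∀ w ∈ axioms, ∀ a ∈ w, a ∈ V
  i0_mem : i0 ∈ Finset.Icc 1 k
  F_sub : F ⊆ Finset.Icc 1 k
  R_wf : ∀ q ∈ R, q.1 ∈ Finset.Icc 1 k ∧ q.2.2 ∈ Finset.Icc 1 k ∧
    q.2.1.core ≠ [] ∧ (∀ a ∈ q.2.1.lctx, a ∈ V) ∧
    (∀ a ∈ q.2.1.core, a ∈ V) ∧ (∀ a ∈ q.2.1.rctx, a ∈ V)

/-- One derivation step between configurations: `(w)_i ⇒ (w')_j` if some rule
`(i, r, j)` of the system applied to `w` yields `w'`. -/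
def Step (S : System) (c c' : Word × ℕ) : Prop :=
  ∃ q ∈ S.R, q.1 = c.2 ∧ q.2.2 = c'.2 ∧ q.2.1.Applies c.1 c'.1

/-- The reflexive-transitive closure `⇒*` of the step relation. -/
def Derives (S : System) : Word × ℕ → Word × ℕ → Prop :=
  Relation.ReflTransGen (Step S)

/-- The language generated:
`L(Π) = { w ∈ T* : (x)_{i0} ⇒* (w)_{i_f} for some axiom x and some i_f ∈ F }`. -/
def language (S : System) : Set Word :=
  { w | (∀ a ∈ w, a ∈ S.T) ∧
    ∃ x ∈ S.axioms, ∃ f ∈ S.F, Derives S (x, S.i0) (w, f) }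

/-- A single rule obeys the size bounds `(n, i', i''; m, j', j'')`. -/
def InsDelRule.SizeLE (r : InsDelRule) (n i' i'' m j' j'' : ℕ) : Prop :=
  (r.isInsertion = true →
    r.core.length ≤ n ∧ r.lctx.length ≤ i' ∧ r.rctx.length ≤ i'') ∧
  (r.isInsertion = false →
    r.core.length ≤ m ∧ r.lctx.length ≤ j' ∧ r.rctx.length ≤ j'')

/-- The system has size `(k; n, i', i''; m, j', j'')`. -/
def HasSize (S : System) (k n i' i'' m j' j'' : ℕ) : Prop :=
  S.k = k ∧ ∀ q ∈ S.R, q.2.1.SizeLE n i' i'' m j' j''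

/-- Star-controlled: the underlying undirected control graph (with an edge
`{Ci, Cj}` whenever there is a rule `(i, r, j)`) has exactly the edge set
`{ {C1, Ci} : 2 ≤ i ≤ k }`; in particular there are no loops. -/
def StarControlled (S : System) : Prop :=
  (∀ q ∈ S.R, ∃ i ∈ Finset.Icc 2 S.k, ({q.1, q.2.2} : Finset ℕ) = {1, i}) ∧
  (∀ i ∈ Finset.Icc 2 S.k, ∃ q ∈ S.R, ({q.1, q.2.2} : Finset ℕ) = {1, i})

/-- The class `GCID(k; n, i', i''; m, j', j'')` of languages generated by GCID
systems of the given size. -/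
def GCIDClass (k n i' i'' m j' j'' : ℕ) : Set (Set Word) :=
  { L | ∃ S : System, HasSize S k n i' i'' m j' j'' ∧ language S = L }

/-- The class `GCID_S(k; n, i', i''; m, j', j'')` of languages generated by
star-controlled GCID systems of the given size. -/
def GCID_S (k n i' i'' m j' j'' : ℕ) : Set (Set Word) :=
  { L | ∃ S : System, StarControlled S ∧ HasSize S k n i' i'' m j' j'' ∧
    language S = L }

/-- The star-controlled GCID system with two components, alphabet
`V = T = {a, b, c, d}` (encoded as `a = 0`, `b = 1`, `c = 2`, `d = 3`), axiom
`abcd` in component `C1`, initial and final component `C1`, and rules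
`(1, (a, a, λ)_I, 2)`, `(1, (b, b, λ)_I, 2)`, `(2, (c, c, λ)_I, 1)`,
`(2, (d, d, λ)_I, 1)`. -/
def mergedSystem : System where
  k := 2
  V := {0, 1, 2, 3}
  T := {0, 1, 2, 3}
  axioms := {[0, 1, 2, 3]}
  i0 := 1
  F := {1}
  R := {(1, insRule [0] [0] [], 2), (1, insRule [1] [1] [], 2),
        (2, insRule [2] [2] [], 1), (2, insRule [3] [3] [], 1)}
  k_pos := by decide
  T_sub_V := by decide
  axioms_over_V := by decide
  i0_mem := by decide
  F_sub := by decide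
  R_wf := by decide

lemma star_ctrl : StarControlled mergedSystem := by
  constructor
  · intro q hq
    refine ⟨2, by decide, ?_⟩
    fin_cases hq <;> decide
  · intro i hi
    simp only [mergedSystem, Finset.mem_Icc] at hi
    have : i = 2 := by omega
    subst this
    exact ⟨(1, insRule [0] [0] [], 2), by decide, by decide⟩

lemma sorted_mid (x y : Word) (s : ℕ) (h : List.Pairwise (· ≤ ·) (x ++ s :: y)) :
    List.Pairwise (· ≤ ·) (x ++ s :: s :: y) := by
  simp only [List.pairwise_append, List.pairwise_cons, List.mem_cons] at h ⊢
  obtain ⟨hx, ⟨hy, hpy⟩, hxy⟩ := h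
  refine ⟨hx, ⟨fun b hb => ?_, hy, hpy⟩, fun a ha b hb => ?_⟩
  · rcases hb with rfl | hb
    · exact le_refl _
    · exact hy b hb
  · have h1 := hxy a ha s (Or.inl rfl)
    rcases hb with hb | hb | hb
    · omega
    · omega
    · exact hxy a ha b (Or.inr hb)
lemma sorted_eq : ∀ (w : Word), (∀ a ∈ w, a ≤ 3) → List.Pairwise (· ≤ ·) w →
    w = List.replicate (w.count 0) 0 ++ List.replicate (w.count 1) 1 ++
      List.replicate (w.count 2) 2 ++ List.replicate (w.count 3) 3 := by
  intro w
  induction w with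
  | nil => simp
  | cons a t ih =>
    intro hle hs
    rw [List.pairwise_cons] at hs
    obtain ⟨hab, hst⟩ := hs
    have iht := ih (fun b hb => hle b (List.mem_cons_of_mem a hb)) hst
    have ha3 : a ≤ 3 := hle a (List.mem_cons_self (a := a) (l := t))
    interval_cases a
    · rw [List.count_cons_self, List.count_cons_of_ne (by decide),
        List.count_cons_of_ne (by decide), List.count_cons_of_ne (by decide),
        List.replicate_succ]
      simp only [List.cons_append]
      exact congrArg (List.cons 0) iht
    · have c0 : t.count 0 = 0 := List.count_eq_zero.mpr (fun h => by have := hab 0 h; omega)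
      rw [List.count_cons_of_ne (by decide), List.count_cons_self,
        List.count_cons_of_ne (by decide), List.count_cons_of_ne (by decide), c0]
      rw [c0] at iht; simp only [List.replicate_zero, List.nil_append] at iht
      simp only [List.replicate_zero, List.nil_append, List.replicate_succ, List.cons_append]
      exact congrArg (List.cons 1) iht
    · have c0 : t.count 0 = 0 := List.count_eq_zero.mpr (fun h => by have := hab 0 h; omega)
      have c1 : t.count 1 = 0 := List.count_eq_zero.mpr (fun h => by have := hab 1 h; omega)
      rw [List.count_cons_of_ne (by decide), List.count_cons_of_ne (by decide),
        List.count_cons_self, List.count_cons_of_ne (by decide), c0, c1]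
      rw [c0, c1] at iht; simp only [List.replicate_zero, List.nil_append] at iht
      simp only [List.replicate_zero, List.nil_append, List.replicate_succ, List.cons_append]
      exact congrArg (List.cons 2) iht
    · have c0 : t.count 0 = 0 := List.count_eq_zero.mpr (fun h => by have := hab 0 h; omega)
      have c1 : t.count 1 = 0 := List.count_eq_zero.mpr (fun h => by have := hab 1 h; omega)
      have c2 : t.count 2 = 0 := List.count_eq_zero.mpr (fun h => by have := hab 2 h; omega)
      rw [List.count_cons_of_ne (by decide), List.count_cons_of_ne (by decide),
        List.count_cons_of_ne (by decide), List.count_cons_self, c0, c1, c2]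
      rw [c0, c1, c2] at iht; simp only [List.replicate_zero, List.nil_append] at iht
      simp only [List.replicate_zero, List.nil_append, List.replicate_succ, List.cons_append]
      exact congrArg (List.cons 3) iht
def Inv (c : Word × ℕ) : Prop :=
  List.Pairwise (· ≤ ·) c.1 ∧ (∀ a ∈ c.1, a ≤ 3) ∧
  1 ≤ c.1.count 0 ∧ 1 ≤ c.1.count 1 ∧ 1 ≤ c.1.count 2 ∧ 1 ≤ c.1.count 3 ∧
  ((c.2 = 1 ∧ c.1.count 0 + c.1.count 1 = c.1.count 2 + c.1.count 3) ∨
   (c.2 = 2 ∧ c.1.count 0 + c.1.count 1 = c.1.count 2 + c.1.count 3 + 1))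

lemma step_inv {c c' : Word × ℕ} (h : Step mergedSystem c c') (hc : Inv c) : Inv c' := by
  obtain ⟨w, i⟩ := c
  obtain ⟨w', i'⟩ := c'
  obtain ⟨q, hq, hq1, hq2, happ⟩ := h
  obtain ⟨hsort, hle, h0, h1, h2, h3, hbal⟩ := hc
  simp only [mergedSystem, Finset.mem_insert, Finset.mem_singleton] at hq
  rcases hq with rfl | rfl | rfl | rfl <;>
  · obtain ⟨x, y, hw, hw'⟩ := happ.1 rfl
    simp only [insRule, List.append_nil, List.append_assoc, List.singleton_append,
      List.cons_append, List.nil_append] at hw hw' hq1 hq2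
    subst hw hw'
    refine ⟨sorted_mid _ _ _ hsort, ?_, ?_, ?_, ?_, ?_, ?_⟩
    · intro a ha
      apply hle
      simp only [List.mem_append, List.mem_cons] at ha ⊢
      tauto
    all_goals norm_num [List.count_append, List.count_cons] at h0 h1 h2 h3 hbal ⊢
    all_goals omega
def word (i j n m : ℕ) : Word :=
  List.replicate i 0 ++ List.replicate j 1 ++ List.replicate n 2 ++ List.replicate m 3

lemma step_a (i j n m : ℕ) :
    Step mergedSystem (word (i+1) j n m, 1) (word (i+2) j n m, 2) := by
  refine ⟨(1, insRule [0] [0] [], 2), by simp [mergedSystem], rfl, rfl, ?_⟩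
  refine ⟨fun _ => ⟨List.replicate i 0,
    List.replicate j 1 ++ List.replicate n 2 ++ List.replicate m 3, ?_, ?_⟩,
    fun h => by simp [insRule] at h⟩ <;>
  · simp [word, insRule, List.replicate_succ' , List.replicate_add, List.append_assoc]

lemma step_b (i j n m : ℕ) :
    Step mergedSystem (word i (j+1) n m, 1) (word i (j+2) n m, 2) := by
  refine ⟨(1, insRule [1] [1] [], 2), by simp [mergedSystem], rfl, rfl, ?_⟩
  refine ⟨fun _ => ⟨List.replicate i 0 ++ List.replicate j 1,
    List.replicate n 2 ++ List.replicate m 3, ?_, ?_⟩,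
    fun h => by simp [insRule] at h⟩ <;>
  · simp [word, insRule, List.replicate_succ', List.replicate_add, List.append_assoc]

lemma step_c (i j n m : ℕ) :
    Step mergedSystem (word i j (n+1) m, 2) (word i j (n+2) m, 1) := by
  refine ⟨(2, insRule [2] [2] [], 1), by simp [mergedSystem], rfl, rfl, ?_⟩
  refine ⟨fun _ => ⟨List.replicate i 0 ++ List.replicate j 1 ++ List.replicate n 2,
    List.replicate m 3, ?_, ?_⟩,
    fun h => by simp [insRule] at h⟩ <;>
  · simp [word, insRule, List.replicate_succ', List.replicate_add, List.append_assoc]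

lemma step_d (i j n m : ℕ) :
    Step mergedSystem (word i j n (m+1), 2) (word i j n (m+2), 1) := by
  refine ⟨(2, insRule [3] [3] [], 1), by simp [mergedSystem], rfl, rfl, ?_⟩
  refine ⟨fun _ => ⟨List.replicate i 0 ++ List.replicate j 1 ++ List.replicate n 2 ++
    List.replicate m 3, [], ?_, ?_⟩,
    fun h => by simp [insRule] at h⟩ <;>
  · simp [word, insRule, List.replicate_succ', List.replicate_add, List.append_assoc]

lemma reach (k : ℕ) : ∀ i j n m : ℕ, i + j = k → 1 ≤ i → 1 ≤ j → 1 ≤ n → 1 ≤ m →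
    i + j = n + m → Derives mergedSystem ([0,1,2,3], 1) (word i j n m, 1) := by
  induction k using Nat.strong_induction_on with
  | _ k IH =>
    intro i j n m hk hi hj hn hm hb
    by_cases hbase : i = 1 ∧ j = 1
    · obtain ⟨rfl, rfl⟩ := hbase
      have hn1 : n = 1 := by omega
      have hm1 : m = 1 := by omega
      subst hn1 hm1
      have : word 1 1 1 1 = ([0,1,2,3] : Word) := by simp [word]
      rw [this]
      exact Relation.ReflTransGen.refl
    · have h2 : 2 ≤ i ∨ 2 ≤ j := by omega
      have h2' : 2 ≤ n ∨ 2 ≤ m := by omega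
      rcases h2 with hi2 | hj2
      · obtain ⟨i', rfl⟩ : ∃ i', i = i' + 2 := ⟨i - 2, by omega⟩
        rcases h2' with hn2 | hm2
        · obtain ⟨n', rfl⟩ : ∃ n', n = n' + 2 := ⟨n - 2, by omega⟩
          have prev := IH (i' + 1 + j) (by omega) (i' + 1) j (n' + 1) m rfl (by omega) hj
            (by omega) hm (by omega)
          exact prev.tail (step_a _ _ _ _) |>.tail (step_c _ _ _ _)
        · obtain ⟨m', rfl⟩ : ∃ m', m = m' + 2 := ⟨m - 2, by omega⟩
          have prev := IH (i' + 1 + j) (by omega) (i' + 1) j n (m' + 1) rfl (by omega) hj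
            hn (by omega) (by omega)
          exact prev.tail (step_a _ _ _ _) |>.tail (step_d _ _ _ _)
      · obtain ⟨j', rfl⟩ : ∃ j', j = j' + 2 := ⟨j - 2, by omega⟩
        rcases h2' with hn2 | hm2
        · obtain ⟨n', rfl⟩ : ∃ n', n = n' + 2 := ⟨n - 2, by omega⟩
          have prev := IH (i + (j' + 1)) (by omega) i (j' + 1) (n' + 1) m rfl hi (by omega)
            (by omega) hm (by omega)
          exact prev.tail (step_b _ _ _ _) |>.tail (step_c _ _ _ _)
        · obtain ⟨m', rfl⟩ : ∃ m', m = m' + 2 := ⟨m - 2, by omega⟩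
          have prev := IH (i + (j' + 1)) (by omega) i (j' + 1) n (m' + 1) rfl hi (by omega)
            hn (by omega) (by omega)
          exact prev.tail (step_b _ _ _ _) |>.tail (step_d _ _ _ _)
lemma derives_inv {c c' : Word × ℕ} (h : Derives mergedSystem c c') (hc : Inv c) : Inv c' := by
  induction h with
  | refl => exact hc
  | tail _ hstep ih => exact step_inv hstep ih

/-- The system `mergedSystem` is star-controlled and generates exactly the
language `{ aⁱbʲcⁿdᵐ : i, j, m, n ≥ 1 and i + j = n + m }`. -/
theorem mergedSystem_generates :
    StarControlled mergedSystem ∧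
      language mergedSystem =
        { w : Word | ∃ i j n m : ℕ, 1 ≤ i ∧ 1 ≤ j ∧ 1 ≤ n ∧ 1 ≤ m ∧
          i + j = n + m ∧
          w = List.replicate i 0 ++ List.replicate j 1 ++
              List.replicate n 2 ++ List.replicate m 3 } := by
  refine ⟨star_ctrl, ?_⟩
  ext w
  simp only [language, Set.mem_setOf_eq]
  constructor
  · rintro ⟨hT, x, hx, f, hf, hder⟩
    simp only [mergedSystem, Finset.mem_singleton] at hx hf
    subst hx hf
    have hinv : Inv (w, 1) := derives_inv hder
      ⟨by decide, by decide, by decide, by decide, by decide, by decide,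
        Or.inl ⟨rfl, by decide⟩⟩
    obtain ⟨hs, hle3, h0c, h1c, h2c, h3c, hbal⟩ := hinv
    rcases hbal with ⟨_, hb⟩ | ⟨hf2, _⟩
    · exact ⟨w.count 0, w.count 1, w.count 2, w.count 3, h0c, h1c, h2c, h3c, hb,
        sorted_eq w hle3 hs⟩
    · exact absurd hf2 (by norm_num)
  · rintro ⟨i, j, n, m, hi, hj, hn, hm, hb, rfl⟩
    refine ⟨?_, [0,1,2,3], by simp [mergedSystem], 1, by simp [mergedSystem], ?_⟩
    · intro a ha
      simp only [List.mem_append] at ha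
      have : a = 0 ∨ a = 1 ∨ a = 2 ∨ a = 3 := by
        rcases ha with ((h | h) | h) | h <;>
          [exact Or.inl (List.eq_of_mem_replicate h);
           exact Or.inr (Or.inl (List.eq_of_mem_replicate h));
           exact Or.inr (Or.inr (Or.inl (List.eq_of_mem_replicate h)));
           exact Or.inr (Or.inr (Or.inr (List.eq_of_mem_replicate h)))]
      simp [mergedSystem]
      omega
    · exact reach (i + j) i j n m rfl hi hj hn hm hb
end GCIDPaper
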